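/- If ε_0, ε_1,…, ε_n are i.i.d. mean-zero random variables with variance η and finite fourth moment, independent of a process X with E[(X_{i/n} − X_{(i−1)/n})²] ≤ K/n, then the estimator η̂ = (1/(2n)) Σ_{i=1}^n (Y_{i/n} − Y_{(i−1)/n})², with Y_{i/n} = X_{i/n} + ε_i, satisfies E[(η̂ − η)²] ≤ C/n for a constant C; in particular η̂ = η + O_P(n^{-1/2}). -/

import Mathlib

open MeasureTheory ProbabilityTheory

set_option maxHeartbeats 1000000

lemma abs_mul4_le (w x y z : ℝ) :
    |w * x * y * z| ≤ (w ^ 4 + x ^ 4 + y ^ 4 + z ^ 4) / 4 := by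
  have h1 : |w * x * y * z| = |w * x| * |y * z| := by
    rw [← abs_mul]; ring_nf
  have h2 : |w * x| ≤ (w ^ 2 + x ^ 2) / 2 := by
    rcases abs_cases (w * x) with ⟨h, _⟩ | ⟨h, _⟩ <;> nlinarith [sq_nonneg (w - x), sq_nonneg (w + x)]
  have h3 : |y * z| ≤ (y ^ 2 + z ^ 2) / 2 := by
    rcases abs_cases (y * z) with ⟨h, _⟩ | ⟨h, _⟩ <;> nlinarith [sq_nonneg (y - z), sq_nonneg (y + z)]
  calc |w * x * y * z| = |w * x| * |y * z| := h1
    _ ≤ ((w ^ 2 + x ^ 2) / 2) * ((y ^ 2 + z ^ 2) / 2) :=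
        mul_le_mul h2 h3 (abs_nonneg _) (by positivity)
    _ ≤ (w ^ 4 + x ^ 4 + y ^ 4 + z ^ 4) / 4 := by
        nlinarith [sq_nonneg (w ^ 2 - y ^ 2), sq_nonneg (w ^ 2 - z ^ 2),
          sq_nonneg (x ^ 2 - y ^ 2), sq_nonneg (x ^ 2 - z ^ 2)]

lemma sum_ite_le {α : Type*} [Fintype α] (p : α → Prop) [DecidablePred p] (B : ℝ) (hB : 0 ≤ B)
    (hp : ∀ x y, p x → p y → x = y) : ∑ j : α, (if p j then B else 0) ≤ B := by
  classical
  rw [← Finset.sum_filter]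
  rw [Finset.sum_const]
  have hcard : (Finset.univ.filter p).card ≤ 1 :=
    Finset.card_le_one.mpr (fun a ha b hb => hp a b (by simpa using ha) (by simpa using hb))
  rw [nsmul_eq_mul]
  calc ((Finset.univ.filter p).card : ℝ) * B ≤ 1 * B := by
        apply mul_le_mul_of_nonneg_right _ hB
        exact_mod_cast hcard
    _ = B := one_mul B

lemma sum_three_diag {n : ℕ} (c : Fin n → Fin n → ℝ) (B : ℝ) (hB : 0 ≤ B)
    (hb : ∀ i j, c i j ≤ B)
    (h0 : ∀ i j, j ≠ i → i.succ ≠ j.castSucc → i.castSucc ≠ j.succ → c i j = 0) :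
    ∑ i : Fin n, ∑ j : Fin n, c i j ≤ n * (3 * B) := by
  classical
  have key : ∀ i : Fin n, ∑ j, c i j ≤ 3 * B := by
    intro i
    have hle : ∀ j, c i j ≤ (if j = i then B else 0) + (if i.succ = j.castSucc then B else 0)
        + (if i.castSucc = j.succ then B else 0) := by
      intro j
      have n1 : (0:ℝ) ≤ (if j = i then B else 0) := by split_ifs <;> simp [hB]
      have n2 : (0:ℝ) ≤ (if i.succ = j.castSucc then B else 0) := by split_ifs <;> simp [hB]
      have n3 : (0:ℝ) ≤ (if i.castSucc = j.succ then B else 0) := by split_ifs <;> simp [hB]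
      by_cases h1 : j = i
      · rw [if_pos h1]; linarith [hb i j]
      rw [if_neg h1]
      by_cases h2 : i.succ = j.castSucc
      · rw [if_pos h2]; linarith [hb i j]
      rw [if_neg h2]
      by_cases h3 : i.castSucc = j.succ
      · rw [if_pos h3]; linarith [hb i j]
      · rw [if_neg h3, h0 i j h1 h2 h3]; simp
    calc ∑ j, c i j ≤ ∑ j, ((if j = i then B else 0) + (if i.succ = j.castSucc then B else 0)
        + (if i.castSucc = j.succ then B else 0)) := Finset.sum_le_sum (fun j _ => hle j)
      _ = (∑ j : Fin n, if j = i then B else 0) + (∑ j : Fin n, if i.succ = j.castSucc then B else 0)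
          + (∑ j : Fin n, if i.castSucc = j.succ then B else 0) := by
          rw [Finset.sum_add_distrib, Finset.sum_add_distrib]
      _ ≤ B + B + B := by
          gcongr
          · exact sum_ite_le (fun j : Fin n => j = i) B hB (fun x y hx hy => by rw [hx, hy])
          · exact sum_ite_le (fun j : Fin n => i.succ = j.castSucc) B hB (fun x y hx hy => by
              have h : x.castSucc = y.castSucc := hx.symm.trans hy
              exact Fin.castSucc_inj.mp h)
          · exact sum_ite_le (fun j : Fin n => i.castSucc = j.succ) B hB (fun x y hx hy => by
              have h : x.succ = y.succ := hx.symm.trans hy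
              exact Fin.succ_inj.mp h)
      _ = 3 * B := by ring
  calc ∑ i : Fin n, ∑ j, c i j ≤ ∑ _i : Fin n, 3 * B := Finset.sum_le_sum (fun i _ => key i)
    _ = n * (3 * B) := by rw [Finset.sum_const, Finset.card_univ, Fintype.card_fin, nsmul_eq_mul]


lemma integrable_of_bound4 {Ω : Type} [MeasurableSpace Ω] {P : Measure Ω} [IsProbabilityMeasure P]
    {f g h k r : Ω → ℝ} (hr : AEStronglyMeasurable r P)
    (hbound : ∀ ω, |r ω| ≤ (f ω ^ 4 + g ω ^ 4 + h ω ^ 4 + k ω ^ 4) / 4)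
    (if4 : Integrable (fun ω => f ω ^ 4) P) (ig4 : Integrable (fun ω => g ω ^ 4) P)
    (ih4 : Integrable (fun ω => h ω ^ 4) P) (ik4 : Integrable (fun ω => k ω ^ 4) P) :
    Integrable r P := by
  have hi : Integrable (fun ω => (f ω ^ 4 + g ω ^ 4 + h ω ^ 4 + k ω ^ 4) / 4) P :=
    (((if4.add ig4).add ih4).add ik4).div_const 4
  refine hi.mono hr ?_
  filter_upwards with ω
  rw [Real.norm_eq_abs, Real.norm_eq_abs]
  refine (hbound ω).trans (le_abs_self _)

lemma pow4_le_of_add (u v : ℝ) : u ^ 4 ≤ 8 * (u + v) ^ 4 + 8 * v ^ 4 := by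
  nlinarith [sq_nonneg ((u+v)^2 - v^2), sq_nonneg ((u+v) + v), sq_nonneg ((u+v) - v),
    sq_nonneg (u + 2*v), sq_nonneg u, sq_nonneg v, sq_nonneg (u+v), sq_nonneg ((u+v)*v)]

lemma integrable_pow4_left_of_indep_add {Ω : Type} [MeasurableSpace Ω] {P : Measure Ω}
    [IsProbabilityMeasure P] {U V : Ω → ℝ} (hU : Measurable U) (hV : Measurable V)
    (h : IndepFun U V P) (hint : Integrable (fun ω => (U ω + V ω) ^ 4) P) :
    Integrable (fun ω => U ω ^ 4) P := by
  have hmap : P.map (fun ω => (U ω, V ω)) = (P.map U).prod (P.map V) :=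
    (indepFun_iff_map_prod_eq_prod_map_map hU.aemeasurable hV.aemeasurable).mp h
  have hUV : Measurable (fun ω => (U ω, V ω)) := hU.prodMk hV
  have hF : Measurable (fun p : ℝ × ℝ => ENNReal.ofReal ((p.1 + p.2) ^ 4)) :=
    (ENNReal.measurable_ofReal.comp ((measurable_fst.add measurable_snd).pow_const 4))
  have key : ∫⁻ p, ENNReal.ofReal ((p.1 + p.2) ^ 4) ∂((P.map U).prod (P.map V)) < ⊤ := by
    rw [← hmap, lintegral_map hF hUV]
    have h2 := hint.2
    rw [hasFiniteIntegral_iff_ofReal] at h2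
    · exact h2
    · filter_upwards with ω; positivity
  rw [lintegral_prod_symm _ hF.aemeasurable] at key
  have hmeas_inner : Measurable (fun v => ∫⁻ u, ENNReal.ofReal ((u + v) ^ 4) ∂(P.map U)) := by
    exact Measurable.lintegral_prod_right' (f := fun q : ℝ × ℝ => ENNReal.ofReal ((q.2 + q.1) ^ 4))
      (ENNReal.measurable_ofReal.comp ((measurable_snd.add measurable_fst).pow_const 4))
  have hae : ∀ᵐ v ∂(P.map V), (∫⁻ u, ENNReal.ofReal ((u + v) ^ 4) ∂(P.map U)) < ⊤ :=
    ae_lt_top hmeas_inner key.ne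
  have : IsProbabilityMeasure (P.map V) := Measure.isProbabilityMeasure_map hV.aemeasurable
  obtain ⟨v₀, hv₀⟩ := hae.exists
  refine ⟨(hU.pow_const 4).aestronglyMeasurable, ?_⟩
  rw [hasFiniteIntegral_iff_ofReal (by filter_upwards with ω; positivity)]
  have hptw : ∀ ω, ENNReal.ofReal (U ω ^ 4) ≤
      ENNReal.ofReal (8 * (U ω + v₀) ^ 4) + ENNReal.ofReal (8 * v₀ ^ 4) := by
    intro ω
    rw [← ENNReal.ofReal_add (by positivity) (by positivity)]
    exact ENNReal.ofReal_le_ofReal (pow4_le_of_add (U ω) v₀)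
  calc ∫⁻ ω, ENNReal.ofReal (U ω ^ 4) ∂P
      ≤ ∫⁻ ω, (ENNReal.ofReal (8 * (U ω + v₀) ^ 4) + ENNReal.ofReal (8 * v₀ ^ 4)) ∂P :=
        lintegral_mono (fun ω => hptw ω)
    _ = (∫⁻ ω, ENNReal.ofReal (8 * (U ω + v₀) ^ 4) ∂P) + ENNReal.ofReal (8 * v₀ ^ 4) := by
        rw [lintegral_add_right _ measurable_const, lintegral_const, measure_univ, mul_one]
    _ < ⊤ := by
        refine ENNReal.add_lt_top.mpr ⟨?_, ENNReal.ofReal_lt_top⟩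
        have heq : ∫⁻ ω, ENNReal.ofReal (8 * (U ω + v₀) ^ 4) ∂P
            = ∫⁻ u, ENNReal.ofReal (8 * (u + v₀) ^ 4) ∂(P.map U) :=
          (lintegral_map (f := fun u : ℝ => ENNReal.ofReal (8 * (u + v₀) ^ 4))
            (by fun_prop) hU).symm
        have h8 : ∀ u : ℝ, ENNReal.ofReal (8 * (u + v₀) ^ 4)
            = 8 * ENNReal.ofReal ((u + v₀) ^ 4) := by
          intro u
          rw [ENNReal.ofReal_mul (by norm_num)]
          norm_num
        rw [heq]
        simp only [h8]
        rw [lintegral_const_mul 8 (f := fun u : ℝ => ENNReal.ofReal ((u + v₀) ^ 4)) (by fun_prop)]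
        exact ENNReal.mul_lt_top (by norm_num) hv₀


section Helpers

variable {Ω : Type} [MeasurableSpace Ω] {P : Measure Ω} [IsProbabilityMeasure P]

lemma abs_mul_le_half (x y : ℝ) : |x * y| ≤ (x ^ 2 + y ^ 2) / 2 := by
  rcases abs_cases (x * y) with ⟨h, _⟩ | ⟨h, _⟩ <;>
    nlinarith [sq_nonneg (x - y), sq_nonneg (x + y)]

lemma abs_mul4_le' (w x y z : ℝ) :
    |w * x * y * z| ≤ (w ^ 4 + x ^ 4 + y ^ 4 + z ^ 4) / 4 := by
  have h1 : |w * x * y * z| = |w * x| * |y * z| := by rw [← abs_mul]; ring_nf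
  calc |w * x * y * z| = |w * x| * |y * z| := h1
    _ ≤ ((w ^ 2 + x ^ 2) / 2) * ((y ^ 2 + z ^ 2) / 2) :=
        mul_le_mul (abs_mul_le_half w x) (abs_mul_le_half y z) (abs_nonneg _) (by positivity)
    _ ≤ (w ^ 4 + x ^ 4 + y ^ 4 + z ^ 4) / 4 := by
        nlinarith [sq_nonneg (w ^ 2 - y ^ 2), sq_nonneg (w ^ 2 - z ^ 2),
          sq_nonneg (x ^ 2 - y ^ 2), sq_nonneg (x ^ 2 - z ^ 2)]

lemma integrable_of_bound4' {f g h k r : Ω → ℝ} (hr : AEStronglyMeasurable r P)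
    (hbound : ∀ ω, |r ω| ≤ (f ω ^ 4 + g ω ^ 4 + h ω ^ 4 + k ω ^ 4) / 4)
    (if4 : Integrable (fun ω => f ω ^ 4) P) (ig4 : Integrable (fun ω => g ω ^ 4) P)
    (ih4 : Integrable (fun ω => h ω ^ 4) P) (ik4 : Integrable (fun ω => k ω ^ 4) P) :
    Integrable r P := by
  have hi : Integrable (fun ω => (f ω ^ 4 + g ω ^ 4 + h ω ^ 4 + k ω ^ 4) / 4) P :=
    (((if4.add ig4).add ih4).add ik4).div_const 4
  refine hi.mono hr ?_
  filter_upwards with ω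
  rw [Real.norm_eq_abs, Real.norm_eq_abs]
  exact (hbound ω).trans (le_abs_self _)

lemma one_pow4_int : Integrable (fun ω : Ω => ((fun _ : Ω => (1:ℝ)) ω) ^ 4) P := by
  simpa using (integrable_const (1:ℝ) (μ := P))

lemma integrable_mul_four {f g h k : Ω → ℝ} (hf : Measurable f) (hg : Measurable g)
    (hh : Measurable h) (hk : Measurable k)
    (if4 : Integrable (fun ω => f ω ^ 4) P) (ig4 : Integrable (fun ω => g ω ^ 4) P)
    (ih4 : Integrable (fun ω => h ω ^ 4) P) (ik4 : Integrable (fun ω => k ω ^ 4) P) :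
    Integrable (fun ω => f ω * g ω * h ω * k ω) P :=
  integrable_of_bound4' (((hf.mul hg).mul hh).mul hk).aestronglyMeasurable
    (fun ω => abs_mul4_le' _ _ _ _) if4 ig4 ih4 ik4

lemma integrable_mul_two {f g : Ω → ℝ} (hf : Measurable f) (hg : Measurable g)
    (if4 : Integrable (fun ω => f ω ^ 4) P) (ig4 : Integrable (fun ω => g ω ^ 4) P) :
    Integrable (fun ω => f ω * g ω) P :=
  (integrable_mul_four hf hg measurable_const measurable_const if4 ig4 one_pow4_int
    one_pow4_int).congr (Filter.Eventually.of_forall (fun ω => by simp))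

lemma integrable_single {f : Ω → ℝ} (hf : Measurable f)
    (if4 : Integrable (fun ω => f ω ^ 4) P) : Integrable f P :=
  (integrable_mul_four hf measurable_const measurable_const measurable_const if4 one_pow4_int
    one_pow4_int one_pow4_int).congr (Filter.Eventually.of_forall (fun ω => by simp))

lemma integrable_sq' {f : Ω → ℝ} (hf : Measurable f)
    (if4 : Integrable (fun ω => f ω ^ 4) P) : Integrable (fun ω => f ω ^ 2) P :=
  (integrable_mul_four hf hf measurable_const measurable_const if4 if4 one_pow4_int
    one_pow4_int).congr (Filter.Eventually.of_forall (fun ω => by simp [sq]))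

lemma integrable_sq_mul_sq {f g : Ω → ℝ} (hf : Measurable f) (hg : Measurable g)
    (if4 : Integrable (fun ω => f ω ^ 4) P) (ig4 : Integrable (fun ω => g ω ^ 4) P) :
    Integrable (fun ω => f ω ^ 2 * g ω ^ 2) P :=
  (integrable_mul_four hf hf hg hg if4 if4 ig4 ig4).congr
    (Filter.Eventually.of_forall (fun ω => by ring_nf))

lemma abs_integral_le_half {f g : Ω → ℝ}
    (hf2 : Integrable (fun ω => f ω ^ 2) P) (hg2 : Integrable (fun ω => g ω ^ 2) P)
    (hfg : Integrable (fun ω => f ω * g ω) P) :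
    |∫ ω, f ω * g ω ∂P| ≤ ((∫ ω, f ω ^ 2 ∂P) + ∫ ω, g ω ^ 2 ∂P) / 2 := by
  calc |∫ ω, f ω * g ω ∂P| ≤ ∫ ω, |f ω * g ω| ∂P := by
        have := norm_integral_le_integral_norm (fun ω => f ω * g ω) (μ := P)
        simpa only [Real.norm_eq_abs] using this
    _ ≤ ∫ ω, (f ω ^ 2 + g ω ^ 2) / 2 ∂P :=
        integral_mono hfg.abs ((hf2.add hg2).div_const 2) (fun ω => abs_mul_le_half _ _)
    _ = ((∫ ω, f ω ^ 2 ∂P) + ∫ ω, g ω ^ 2 ∂P) / 2 := by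
        rw [integral_div, integral_add hf2 hg2]

end Helpers



/-- The quadratic-variation based noise-level estimator
`η̂ = (1/(2n)) Σ_{i=1}^n (Y_{i/n} − Y_{(i−1)/n})²` with `Y_{i/n} = X_{i/n} + ε_i`,
for i.i.d. mean-zero noise with variance `η` and finite fourth moment `≤ κ`
independent of the latent process `X` whose increments satisfy
`E[(Δ_i X)²] ≤ K/n` and `E[(Δ_i X)⁴] ≤ K/n`, satisfies
`E[(η̂ − η)²] ≤ C/n` for a constant `C` depending only on `η, κ, K`;
in particular `η̂ = η + O_P(n^{-1/2})`. -/
theorem noise_level_estimator_rate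
    (η κ K : ℝ) (hη : 0 ≤ η) (hκ : 0 ≤ κ) (hK : 0 ≤ K) :
    ∃ C : ℝ, ∀ (n : ℕ), 0 < n →
    ∀ (Ω : Type) (_ : MeasurableSpace Ω) (P : Measure Ω), IsProbabilityMeasure P →
    ∀ (ε X : Fin (n + 1) → Ω → ℝ),
    (∀ i, Measurable (ε i)) → (∀ i, Measurable (X i)) →
    iIndepFun ε P →
    (∀ i j, P.map (ε i) = P.map (ε j)) →
    (∀ i, ∫ ω, ε i ω ∂P = 0) →
    (∀ i, ∫ ω, (ε i ω) ^ 2 ∂P = η) →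
    (∀ i, ∫ ω, (ε i ω) ^ 4 ∂P ≤ κ) →
    IndepFun (fun ω i => ε i ω) (fun ω i => X i ω) P →
    (∀ i : Fin n, ∫ ω, (X i.succ ω - X i.castSucc ω) ^ 2 ∂P ≤ K / n) →
    (∀ i : Fin n, ∫ ω, (X i.succ ω - X i.castSucc ω) ^ 4 ∂P ≤ K / n) →
    ∫ ω, ((1 / (2 * (n : ℝ))) * ∑ i : Fin n,
        ((X i.succ ω + ε i.succ ω) - (X i.castSucc ω + ε i.castSucc ω)) ^ 2 - η) ^ 2 ∂P
      ≤ C / n := by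
  classical
  refine ⟨3*K/4 + 18*η*K + 72*κ + 18*η^2, ?_⟩
  intro n hn Ω mΩ P hP ε X hεm hXm hiid hid hε1 hε2 hε4 hindep hX2 hX4
  have hC0 : (0:ℝ) ≤ 3*K/4 + 18*η*K + 72*κ + 18*η^2 := by positivity
  have hnpos : (0:ℝ) < n := by exact_mod_cast hn
  have hn0 : ((n:ℝ)) ≠ 0 := ne_of_gt hnpos
  obtain ⟨D, hDdef⟩ : ∃ D : Fin n → Ω → ℝ,
      ∀ i ω, D i ω = X i.succ ω - X i.castSucc ω := ⟨_, fun _ _ => rfl⟩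
  obtain ⟨a, hadef⟩ : ∃ a : Fin n → Ω → ℝ,
      ∀ i ω, a i ω = ε i.succ ω - ε i.castSucc ω := ⟨_, fun _ _ => rfl⟩
  have hDm : ∀ i, Measurable (D i) := fun i => by
    have : D i = fun ω => X i.succ ω - X i.castSucc ω := funext (hDdef i)
    rw [this]; exact (hXm _).sub (hXm _)
  have ham : ∀ i, Measurable (a i) := fun i => by
    have : a i = fun ω => ε i.succ ω - ε i.castSucc ω := funext (hadef i)
    rw [this]; exact (hεm _).sub (hεm _)
  have hD2 : ∀ i, ∫ ω, D i ω ^ 2 ∂P ≤ K / n := fun i => by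
    simp only [hDdef]; exact hX2 i
  have hD4m : ∀ i, ∫ ω, D i ω ^ 4 ∂P ≤ K / n := fun i => by
    simp only [hDdef]; exact hX4 i
  have hgoal : (fun ω => ((1 / (2 * (n:ℝ))) * ∑ i : Fin n,
        ((X i.succ ω + ε i.succ ω) - (X i.castSucc ω + ε i.castSucc ω)) ^ 2 - η) ^ 2)
      = fun ω => ((1 / (2 * (n:ℝ))) * ∑ i : Fin n, (D i ω + a i ω) ^ 2 - η) ^ 2 := by
    funext ω
    have h : ∀ i : Fin n, ((X i.succ ω + ε i.succ ω) - (X i.castSucc ω + ε i.castSucc ω)) ^ 2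
        = (D i ω + a i ω) ^ 2 := fun i => by rw [hDdef, hadef]; ring
    rw [Finset.sum_congr rfl (fun i _ => h i)]
  rw [show (∫ ω, ((1 / (2 * (n : ℝ))) * ∑ i : Fin n,
        ((X i.succ ω + ε i.succ ω) - (X i.castSucc ω + ε i.castSucc ω)) ^ 2 - η) ^ 2 ∂P)
      = ∫ ω, ((1 / (2 * (n:ℝ))) * ∑ i : Fin n, (D i ω + a i ω) ^ 2 - η) ^ 2 ∂P from by rw [hgoal]]
  by_cases hInt : Integrable
      (fun ω => ((1 / (2 * (n:ℝ))) * ∑ i : Fin n, (D i ω + a i ω) ^ 2 - η) ^ 2) P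
  swap
  · rw [integral_undef hInt]; exact div_nonneg hC0 hnpos.le
  -- measurability of the sum
  have hSm : Measurable (fun ω => ∑ i : Fin n, (D i ω + a i ω) ^ 2) :=
    Finset.measurable_sum _ (fun i _ => ((hDm i).add (ham i)).pow_const 2)
  -- integrability of the square of the sum
  have hS2int : Integrable (fun ω => (∑ i : Fin n, (D i ω + a i ω) ^ 2) ^ 2) P := by
    have hmaj : Integrable (fun ω => 8*(n:ℝ)^2 *
        ((1 / (2 * (n:ℝ))) * ∑ i : Fin n, (D i ω + a i ω) ^ 2 - η) ^ 2 + 8*(n:ℝ)^2*η^2) P :=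
      (hInt.const_mul _).add (integrable_const _)
    refine hmaj.mono (hSm.pow_const 2).aestronglyMeasurable (Filter.Eventually.of_forall fun ω => ?_)
    rw [Real.norm_eq_abs, Real.norm_eq_abs, abs_of_nonneg (sq_nonneg _)]
    set t := ∑ i : Fin n, (D i ω + a i ω) ^ 2 with ht
    set u := (1 / (2 * (n:ℝ))) * t - η with hu
    have key : t = 2*(n:ℝ)*u + 2*(n:ℝ)*η := by rw [hu]; field_simp; ring
    have h1 : t ^ 2 ≤ 8*(n:ℝ)^2*u^2 + 8*(n:ℝ)^2*η^2 := by
      rw [key]; nlinarith [sq_nonneg ((n:ℝ)*(u - η))]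
    exact h1.trans (le_abs_self _)
  -- integrability of each fourth power of increments
  have hT4 : ∀ i : Fin n, Integrable (fun ω => (D i ω + a i ω) ^ 4) P := by
    intro i
    refine hS2int.mono (((hDm i).add (ham i)).pow_const 4).aestronglyMeasurable
      (Filter.Eventually.of_forall fun ω => ?_)
    rw [Real.norm_eq_abs, Real.norm_eq_abs, abs_of_nonneg (by positivity),
      abs_of_nonneg (sq_nonneg _)]
    have hle : (D i ω + a i ω) ^ 2 ≤ ∑ j : Fin n, (D j ω + a j ω) ^ 2 :=
      Finset.single_le_sum (f := fun j => (D j ω + a j ω) ^ 2) (fun j _ => sq_nonneg _) (Finset.mem_univ i)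
    calc (D i ω + a i ω) ^ 4 = ((D i ω + a i ω) ^ 2) ^ 2 := by ring
      _ ≤ (∑ j : Fin n, (D j ω + a j ω) ^ 2) ^ 2 := by
          exact pow_le_pow_left₀ (sq_nonneg _) hle 2
  have hDA_indep : ∀ i : Fin n, IndepFun (D i) (a i) P := by
    intro i
    have hmF : Measurable (fun v : Fin (n+1) → ℝ => v i.succ - v i.castSucc) :=
      (measurable_pi_apply _).sub (measurable_pi_apply _)
    have h := hindep.symm.comp hmF hmF
    have e1 : D i = (fun v : Fin (n+1) → ℝ => v i.succ - v i.castSucc) ∘ (fun ω k => X k ω) :=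
      funext fun ω => by rw [hDdef]; rfl
    have e2 : a i = (fun v : Fin (n+1) → ℝ => v i.succ - v i.castSucc) ∘ (fun ω k => ε k ω) :=
      funext fun ω => by rw [hadef]; rfl
    rw [e1, e2]; exact h
  have hD4int : ∀ i, Integrable (fun ω => D i ω ^ 4) P := fun i =>
    integrable_pow4_left_of_indep_add (hDm i) (ham i) (hDA_indep i) (hT4 i)
  have ha4int : ∀ i, Integrable (fun ω => a i ω ^ 4) P := fun i =>
    integrable_pow4_left_of_indep_add (ham i) (hDm i) (hDA_indep i).symm
      ((hT4 i).congr (Filter.Eventually.of_forall fun ω => by ring_nf))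
  have hsc : ∀ i : Fin n, i.succ ≠ i.castSucc := by
    intro i h
    have := congrArg Fin.val h
    simp [Fin.val_succ, Fin.coe_castSucc] at this
  have hε4i : ∀ k : Fin (n+1), Integrable (fun ω => ε k ω ^ 4) P := by
    have hpair : ∀ i : Fin n, Integrable (fun ω => ε i.succ ω ^ 4) P ∧
        Integrable (fun ω => ε i.castSucc ω ^ 4) P := by
      intro i
      constructor
      · refine integrable_pow4_left_of_indep_add (hεm i.succ) (hεm i.castSucc).neg
          ((hiid.indepFun (hsc i)).comp measurable_id measurable_neg) ?_
        exact (ha4int i).congr (Filter.Eventually.of_forall fun ω => by simp only [hadef, Pi.neg_apply]; ring)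
      · refine integrable_pow4_left_of_indep_add (hεm i.castSucc) (hεm i.succ).neg
          ((hiid.indepFun (hsc i).symm).comp measurable_id measurable_neg) ?_
        exact (ha4int i).congr (Filter.Eventually.of_forall fun ω => by simp only [hadef, Pi.neg_apply]; ring)
    intro k
    by_cases hk : (k : ℕ) < n
    · have hkk : k = (⟨(k:ℕ), hk⟩ : Fin n).castSucc := by
        apply Fin.ext; simp
      rw [hkk]; exact (hpair _).2
    · have hbd := k.isLt
      have hk' : (k:ℕ) = n := by omega
      have hn1 : n - 1 < n := by omega
      have hkk : k = (⟨n-1, hn1⟩ : Fin n).succ := by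
        apply Fin.ext; simp [Fin.val_succ]; omega
      rw [hkk]; exact (hpair _).1
  -- basic integrability
  have hεI : ∀ k, Integrable (ε k) P := fun k => integrable_single (hεm k) (hε4i k)
  have hεsq : ∀ k, Integrable (fun ω => ε k ω ^ 2) P := fun k => integrable_sq' (hεm k) (hε4i k)
  have hεmulI : ∀ p q, Integrable (fun ω => ε p ω * ε q ω) P := fun p q =>
    integrable_mul_two (hεm p) (hεm q) (hε4i p) (hε4i q)
  have haSq : ∀ i, Integrable (fun ω => a i ω ^ 2) P := fun i => integrable_sq' (ham i) (ha4int i)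
  have hDSq : ∀ i, Integrable (fun ω => D i ω ^ 2) P := fun i => integrable_sq' (hDm i) (hD4int i)
  have hDmulI : ∀ i j, Integrable (fun ω => D i ω * D j ω) P := fun i j =>
    integrable_mul_two (hDm i) (hDm j) (hD4int i) (hD4int j)
  have haMulI : ∀ i j, Integrable (fun ω => a i ω * a j ω) P := fun i j =>
    integrable_mul_two (ham i) (ham j) (ha4int i) (ha4int j)
  have hDsqDsq : ∀ i j, Integrable (fun ω => D i ω ^ 2 * D j ω ^ 2) P := fun i j =>
    integrable_sq_mul_sq (hDm i) (hDm j) (hD4int i) (hD4int j)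
  have hasqasq : ∀ i j, Integrable (fun ω => a i ω ^ 2 * a j ω ^ 2) P := fun i j =>
    integrable_sq_mul_sq (ham i) (ham j) (ha4int i) (ha4int j)
  have hDaI : ∀ i j : Fin n, Integrable (fun ω => (D i ω * a i ω) * (D j ω * a j ω)) P :=
    fun i j => (integrable_mul_four (hDm i) (ham i) (hDm j) (ham j)
      (hD4int i) (ha4int i) (hD4int j) (ha4int j)).congr
      (Filter.Eventually.of_forall fun ω => by ring)
  -- moments
  have hεmul0 : ∀ p q, p ≠ q → ∫ ω, ε p ω * ε q ω ∂P = 0 := by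
    intro p q hpq
    have h := (hiid.indepFun hpq).integral_fun_mul_eq_mul_integral
      (hεm p).aestronglyMeasurable (hεm q).aestronglyMeasurable
    rw [h]
    have e1 : ∫ ω, ε p ω ∂P = 0 := hε1 p
    have e2 : ∫ ω, ε q ω ∂P = 0 := hε1 q
    rw [show integral P (ε p) = ∫ ω, ε p ω ∂P from rfl,
      show integral P (ε q) = ∫ ω, ε q ω ∂P from rfl, e1, e2, mul_zero]
  have ha2 : ∀ i, ∫ ω, a i ω ^ 2 ∂P = 2 * η := by
    intro i
    have e : (fun ω => a i ω ^ 2)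
        = fun ω => (ε i.succ ω ^ 2 - 2 * (ε i.succ ω * ε i.castSucc ω)) + ε i.castSucc ω ^ 2 :=
      funext fun ω => by rw [hadef]; ring
    have I1 : Integrable (fun ω => ε i.succ ω ^ 2 - 2 * (ε i.succ ω * ε i.castSucc ω)) P :=
      (hεsq _).sub ((hεmulI _ _).const_mul 2)
    rw [e, integral_add I1 (hεsq _),
      integral_sub (hεsq _) ((hεmulI _ _).const_mul 2), integral_const_mul,
      hε2, hε2, hεmul0 _ _ (hsc i), mul_zero, sub_zero]
    ring
  have ha4 : ∀ i, ∫ ω, a i ω ^ 4 ∂P ≤ 16 * κ := by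
    intro i
    have hb : ∀ ω, a i ω ^ 4 ≤ 8 * ε i.succ ω ^ 4 + 8 * ε i.castSucc ω ^ 4 := fun ω => by
      rw [hadef]
      have h := pow4_le_of_add (ε i.succ ω - ε i.castSucc ω) (ε i.castSucc ω)
      have h2 : ε i.succ ω - ε i.castSucc ω + ε i.castSucc ω = ε i.succ ω := by ring
      rw [h2] at h; linarith
    calc ∫ ω, a i ω ^ 4 ∂P
        ≤ ∫ ω, (8 * ε i.succ ω ^ 4 + 8 * ε i.castSucc ω ^ 4) ∂P :=
          integral_mono (ha4int i) (((hε4i _).const_mul 8).add ((hε4i _).const_mul 8)) hb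
      _ = 8 * (∫ ω, ε i.succ ω ^ 4 ∂P) + 8 * ∫ ω, ε i.castSucc ω ^ 4 ∂P := by
          rw [integral_add ((hε4i _).const_mul 8) ((hε4i _).const_mul 8),
            integral_const_mul, integral_const_mul]
      _ ≤ 8 * κ + 8 * κ := by
          have h1 := hε4 i.succ; have h2 := hε4 i.castSucc
          have := mul_le_mul_of_nonneg_left h1 (by norm_num : (0:ℝ) ≤ 8)
          have := mul_le_mul_of_nonneg_left h2 (by norm_num : (0:ℝ) ≤ 8)
          linarith
      _ = 16 * κ := by ring
  have haa0 : ∀ i j : Fin n, i ≠ j → i.succ ≠ j.castSucc → i.castSucc ≠ j.succ →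
      ∫ ω, a i ω * a j ω ∂P = 0 := by
    intro i j hij h1 h2
    have e : (fun ω => a i ω * a j ω)
        = fun ω => ((ε i.succ ω * ε j.succ ω - ε i.succ ω * ε j.castSucc ω)
            - ε i.castSucc ω * ε j.succ ω) + ε i.castSucc ω * ε j.castSucc ω :=
      funext fun ω => by rw [hadef, hadef]; ring
    have I1 : Integrable (fun ω => ε i.succ ω * ε j.succ ω - ε i.succ ω * ε j.castSucc ω) P :=
      (hεmulI _ _).sub (hεmulI _ _)
    have I2 : Integrable (fun ω => (ε i.succ ω * ε j.succ ω - ε i.succ ω * ε j.castSucc ω)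
        - ε i.castSucc ω * ε j.succ ω) P := I1.sub (hεmulI _ _)
    rw [e, integral_add I2 (hεmulI _ _),
      integral_sub I1 (hεmulI _ _),
      integral_sub (hεmulI _ _) (hεmulI _ _),
      hεmul0 _ _ (fun h => hij (Fin.succ_inj.mp h)), hεmul0 _ _ h1,
      hεmul0 _ _ h2, hεmul0 _ _ (fun h => hij (Fin.castSucc_inj.mp h))]
    ring
  -- covariance bounds
  have hD2nonneg : ∀ i : Fin n, (0:ℝ) ≤ ∫ ω, D i ω ^ 2 ∂P := fun i =>
    integral_nonneg (fun ω => sq_nonneg _)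
  have hDDle : ∀ i j, |∫ ω, D i ω * D j ω ∂P| ≤ K / n := by
    intro i j
    refine (abs_integral_le_half (hDSq i) (hDSq j) (hDmulI i j)).trans ?_
    have := hD2 i; have := hD2 j; linarith
  have haale : ∀ i j, |∫ ω, a i ω * a j ω ∂P| ≤ 2 * η := by
    intro i j
    refine (abs_integral_le_half (haSq i) (haSq j) (haMulI i j)).trans ?_
    rw [ha2 i, ha2 j]; linarith
  -- factorization for the cross part
  have hfact : ∀ i j : Fin n, ∫ ω, (D i ω * a i ω) * (D j ω * a j ω) ∂P
      = (∫ ω, D i ω * D j ω ∂P) * ∫ ω, a i ω * a j ω ∂P := by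
    intro i j
    have hmF : Measurable (fun v : Fin (n+1) → ℝ =>
        (v i.succ - v i.castSucc) * (v j.succ - v j.castSucc)) :=
      ((measurable_pi_apply i.succ).sub (measurable_pi_apply i.castSucc)).mul
        ((measurable_pi_apply j.succ).sub (measurable_pi_apply j.castSucc))
    have hind : IndepFun (fun ω => D i ω * D j ω) (fun ω => a i ω * a j ω) P := by
      have h := hindep.symm.comp hmF hmF
      have e1 : (fun ω => D i ω * D j ω) = (fun v : Fin (n+1) → ℝ =>
          (v i.succ - v i.castSucc) * (v j.succ - v j.castSucc)) ∘ (fun ω k => X k ω) :=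
        funext fun ω => by simp only [hDdef]; rfl
      have e2 : (fun ω => a i ω * a j ω) = (fun v : Fin (n+1) → ℝ =>
          (v i.succ - v i.castSucc) * (v j.succ - v j.castSucc)) ∘ (fun ω k => ε k ω) :=
        funext fun ω => by simp only [hadef]; rfl
      rw [e1, e2]; exact h
    have h := hind.integral_fun_mul_eq_mul_integral ((hDm i).mul (hDm j)).aestronglyMeasurable
      ((ham i).mul (ham j)).aestronglyMeasurable
    calc ∫ ω, (D i ω * a i ω) * (D j ω * a j ω) ∂P
        = ∫ ω, (D i ω * D j ω) * (a i ω * a j ω) ∂P :=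
          integral_congr_ae (Filter.Eventually.of_forall fun ω => by ring)
      _ = (∫ ω, D i ω * D j ω ∂P) * ∫ ω, a i ω * a j ω ∂P := h
  -- the centered squares
  have hgint : ∀ i, Integrable (fun ω => a i ω ^ 2 - 2 * η) P := fun i =>
    (haSq i).sub (integrable_const _)
  have hg0 : ∀ i, ∫ ω, (a i ω ^ 2 - 2 * η) ∂P = 0 := by
    intro i
    rw [integral_sub (haSq i) (integrable_const _), ha2 i, integral_const]
    simp
  have hggint : ∀ i j, Integrable
      (fun ω => (a i ω ^ 2 - 2 * η) * (a j ω ^ 2 - 2 * η)) P := by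
    intro i j
    have h : Integrable (fun ω => (a i ω ^ 2 * a j ω ^ 2 - 2 * η * a i ω ^ 2
        - 2 * η * a j ω ^ 2) + 4 * η ^ 2) P :=
      (((hasqasq i j).sub ((haSq i).const_mul (2*η))).sub ((haSq j).const_mul (2*η))).add
        (integrable_const _)
    exact h.congr (Filter.Eventually.of_forall fun ω => by ring)
  have hgsqint : ∀ i, Integrable (fun ω => (a i ω ^ 2 - 2 * η) ^ 2) P := fun i =>
    (hggint i i).congr (Filter.Eventually.of_forall fun ω => by ring)
  have hgsq : ∀ l, ∫ ω, (a l ω ^ 2 - 2 * η) ^ 2 ∂P ≤ 32 * κ + 8 * η ^ 2 := by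
    intro l
    calc ∫ ω, (a l ω ^ 2 - 2 * η) ^ 2 ∂P
        ≤ ∫ ω, (2 * a l ω ^ 4 + 8 * η ^ 2) ∂P := by
          refine integral_mono (hgsqint l) (((ha4int l).const_mul 2).add (integrable_const _))
            (fun ω => ?_)
          nlinarith [sq_nonneg (a l ω ^ 2 + 2 * η)]
      _ = 2 * (∫ ω, a l ω ^ 4 ∂P) + 8 * η ^ 2 := by
          rw [integral_add ((ha4int l).const_mul 2) (integrable_const _), integral_const_mul,
            integral_const]
          simp
      _ ≤ 32 * κ + 8 * η ^ 2 := by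
          have := ha4 l; linarith
  have hgg_near : ∀ i j, ∫ ω, (a i ω ^ 2 - 2 * η) * (a j ω ^ 2 - 2 * η) ∂P
      ≤ 32 * κ + 8 * η ^ 2 := by
    intro i j
    refine (le_abs_self _).trans ?_
    refine (abs_integral_le_half (hgsqint i) (hgsqint j) (hggint i j)).trans ?_
    have := hgsq i; have := hgsq j; linarith
  have hgg0 : ∀ i j : Fin n, i ≠ j → i.succ ≠ j.castSucc → i.castSucc ≠ j.succ →
      ∫ ω, (a i ω ^ 2 - 2 * η) * (a j ω ^ 2 - 2 * η) ∂P = 0 := by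
    intro i j hij h1 h2
    have hpm := hiid.indepFun_prodMk_prodMk hεm i.castSucc i.succ j.castSucc j.succ
      (fun h => hij (Fin.castSucc_inj.mp h)) h2 h1 (fun h => hij (Fin.succ_inj.mp h))
    have hφ : Measurable (fun p : ℝ × ℝ => (p.2 - p.1) ^ 2 - 2 * η) :=
      ((measurable_snd.sub measurable_fst).pow_const 2).sub measurable_const
    have hind : IndepFun (fun ω => a i ω ^ 2 - 2 * η) (fun ω => a j ω ^ 2 - 2 * η) P := by
      have h := hpm.comp hφ hφ
      have e1 : (fun ω => a i ω ^ 2 - 2 * η) = (fun p : ℝ × ℝ => (p.2 - p.1) ^ 2 - 2 * η)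
          ∘ (fun ω => (ε i.castSucc ω, ε i.succ ω)) := funext fun ω => by
        simp only [Function.comp_apply, hadef]
      have e2 : (fun ω => a j ω ^ 2 - 2 * η) = (fun p : ℝ × ℝ => (p.2 - p.1) ^ 2 - 2 * η)
          ∘ (fun ω => (ε j.castSucc ω, ε j.succ ω)) := funext fun ω => by
        simp only [Function.comp_apply, hadef]
      rw [e1, e2]; exact h
    have h := hind.integral_fun_mul_eq_mul_integral (((ham i).pow_const 2).sub measurable_const).aestronglyMeasurable
      (((ham j).pow_const 2).sub measurable_const).aestronglyMeasurable
    rw [h, hg0 i, hg0 j, mul_zero]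
  -- generic expansion of the square of a sum under the integral
  have hexp : ∀ (c : ℝ) (f : Fin n → Ω → ℝ), (∀ i j, Integrable (fun ω => f i ω * f j ω) P) →
      ∫ ω, (c * ∑ i : Fin n, f i ω) ^ 2 ∂P
        = c ^ 2 * ∑ i : Fin n, ∑ j : Fin n, ∫ ω, f i ω * f j ω ∂P := by
    intro c f hf
    have e : (fun ω => (c * ∑ i : Fin n, f i ω) ^ 2)
        = fun ω => c ^ 2 * ∑ i : Fin n, ∑ j : Fin n, f i ω * f j ω := by
      funext ω
      rw [mul_pow]
      congr 1
      rw [pow_two, Finset.sum_mul_sum]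
    rw [e, integral_const_mul,
      integral_finset_sum _ (fun i _ => integrable_finset_sum _ (fun j _ => hf i j))]
    congr 1
    exact Finset.sum_congr rfl (fun i _ => integral_finset_sum _ (fun j _ => hf i j))
  have hsqint : ∀ (c : ℝ) (f : Fin n → Ω → ℝ),
      (∀ i j, Integrable (fun ω => f i ω * f j ω) P) →
      Integrable (fun ω => (c * ∑ i : Fin n, f i ω) ^ 2) P := by
    intro c f hf
    have e : (fun ω => (c * ∑ i : Fin n, f i ω) ^ 2)
        = fun ω => c ^ 2 * ∑ i : Fin n, ∑ j : Fin n, f i ω * f j ω := by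
      funext ω
      rw [mul_pow]
      congr 1
      rw [pow_two, Finset.sum_mul_sum]
    rw [e]
    exact (integrable_finset_sum _
      (fun i _ => integrable_finset_sum _ (fun j _ => hf i j))).const_mul _
  have hge1 : (1:ℝ) ≤ n := by exact_mod_cast hn
  -- bound for the A part
  have hA : ∫ ω, ((1/(2*(n:ℝ))) * ∑ i : Fin n, D i ω ^ 2) ^ 2 ∂P ≤ K/(4*n) := by
    rw [hexp (1/(2*(n:ℝ))) (fun i ω => D i ω ^ 2) (fun i j => hDsqDsq i j)]
    have hterm : ∀ i j : Fin n, ∫ ω, D i ω ^ 2 * D j ω ^ 2 ∂P ≤ K/n := by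
      intro i j
      calc ∫ ω, D i ω ^ 2 * D j ω ^ 2 ∂P
          ≤ ∫ ω, (D i ω ^ 4 + D j ω ^ 4)/2 ∂P :=
            integral_mono (hDsqDsq i j) (((hD4int i).add (hD4int j)).div_const 2)
              (fun ω => by nlinarith [sq_nonneg (D i ω ^ 2 - D j ω ^ 2)])
        _ = ((∫ ω, D i ω ^ 4 ∂P) + ∫ ω, D j ω ^ 4 ∂P)/2 := by
            rw [integral_div, integral_add (hD4int i) (hD4int j)]
        _ ≤ K/n := by have := hD4m i; have := hD4m j; linarith
    calc (1/(2*(n:ℝ))) ^ 2 * ∑ i : Fin n, ∑ j : Fin n, ∫ ω, D i ω ^ 2 * D j ω ^ 2 ∂P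
        ≤ (1/(2*(n:ℝ))) ^ 2 * ∑ _i : Fin n, ∑ _j : Fin n, K/(n:ℝ) := by
          refine mul_le_mul_of_nonneg_left ?_ (by positivity)
          exact Finset.sum_le_sum (fun i _ => Finset.sum_le_sum (fun j _ => hterm i j))
      _ = K/(4*n) := by
          simp only [Finset.sum_const, Finset.card_univ, Fintype.card_fin, nsmul_eq_mul]
          field_simp
          ring
  -- bound for the B part
  have hB : ∫ ω, ((1/(n:ℝ)) * ∑ i : Fin n, D i ω * a i ω) ^ 2 ∂P ≤ 6*η*K/n := by
    rw [hexp (1/(n:ℝ)) (fun i ω => D i ω * a i ω) (fun i j => hDaI i j)]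
    calc (1/(n:ℝ)) ^ 2 * ∑ i : Fin n, ∑ j : Fin n, ∫ ω, (D i ω * a i ω) * (D j ω * a j ω) ∂P
        = (1/(n:ℝ)) ^ 2 * ∑ i : Fin n, ∑ j : Fin n,
            (∫ ω, D i ω * D j ω ∂P) * ∫ ω, a i ω * a j ω ∂P := by
          rw [Finset.sum_congr rfl (fun i _ => Finset.sum_congr rfl (fun j _ => hfact i j))]
      _ ≤ (1/(n:ℝ)) ^ 2 * ((n:ℝ) * (3 * ((K/n) * (2*η)))) := by
          refine mul_le_mul_of_nonneg_left ?_ (by positivity)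
          refine sum_three_diag _ _ (by positivity) ?_ ?_
          · intro i j
            refine (le_abs_self _).trans ?_
            rw [abs_mul]
            exact mul_le_mul (hDDle i j) (haale i j) (abs_nonneg _) (div_nonneg hK hnpos.le)
          · intro i j hji h1 h2
            rw [haa0 i j (Ne.symm hji) h1 h2, mul_zero]
      _ ≤ 6*η*K/n := by
          have h1 : (1/(n:ℝ)) ^ 2 * ((n:ℝ) * (3 * ((K/(n:ℝ)) * (2*η)))) = 6*η*K/(n:ℝ)^2 := by
            field_simp; ring
          rw [h1]
          apply div_le_div_of_nonneg_left (by positivity) hnpos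
          nlinarith
  -- bound for the C part
  have hCC : ∫ ω, ((1/(2*(n:ℝ))) * ∑ i : Fin n, (a i ω ^ 2 - 2*η)) ^ 2 ∂P
      ≤ (24*κ + 6*η^2)/n := by
    rw [hexp (1/(2*(n:ℝ))) (fun i ω => a i ω ^ 2 - 2*η) (fun i j => hggint i j)]
    calc (1/(2*(n:ℝ))) ^ 2 * ∑ i : Fin n, ∑ j : Fin n,
          ∫ ω, (a i ω ^ 2 - 2*η) * (a j ω ^ 2 - 2*η) ∂P
        ≤ (1/(2*(n:ℝ))) ^ 2 * ((n:ℝ) * (3 * (32*κ + 8*η^2))) := by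
          refine mul_le_mul_of_nonneg_left ?_ (by positivity)
          refine sum_three_diag _ _ (by positivity) ?_ ?_
          · intro i j; exact hgg_near i j
          · intro i j hji h1 h2; exact hgg0 i j (Ne.symm hji) h1 h2
      _ = (24*κ + 6*η^2)/n := by field_simp; ring
  -- assembly
  have hAint : Integrable (fun ω => ((1/(2*(n:ℝ))) * ∑ i : Fin n, D i ω ^ 2) ^ 2) P :=
    hsqint _ _ (fun i j => hDsqDsq i j)
  have hBint : Integrable (fun ω => ((1/(n:ℝ)) * ∑ i : Fin n, D i ω * a i ω) ^ 2) P :=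
    hsqint _ _ (fun i j => hDaI i j)
  have hCint : Integrable (fun ω => ((1/(2*(n:ℝ))) * ∑ i : Fin n, (a i ω ^ 2 - 2*η)) ^ 2) P :=
    hsqint _ _ (fun i j => hggint i j)
  have I1 : Integrable (fun ω => 3 * ((1/(2*(n:ℝ))) * ∑ i : Fin n, D i ω ^ 2) ^ 2) P :=
    hAint.const_mul 3
  have I2 : Integrable (fun ω => 3 * ((1/(n:ℝ)) * ∑ i : Fin n, D i ω * a i ω) ^ 2) P :=
    hBint.const_mul 3
  have I3 : Integrable
      (fun ω => 3 * ((1/(2*(n:ℝ))) * ∑ i : Fin n, (a i ω ^ 2 - 2*η)) ^ 2) P :=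
    hCint.const_mul 3
  have I12 : Integrable (fun ω => 3 * ((1/(2*(n:ℝ))) * ∑ i : Fin n, D i ω ^ 2) ^ 2
      + 3 * ((1/(n:ℝ)) * ∑ i : Fin n, D i ω * a i ω) ^ 2) P := I1.add I2
  have I123 : Integrable (fun ω => 3 * ((1/(2*(n:ℝ))) * ∑ i : Fin n, D i ω ^ 2) ^ 2
      + 3 * ((1/(n:ℝ)) * ∑ i : Fin n, D i ω * a i ω) ^ 2
      + 3 * ((1/(2*(n:ℝ))) * ∑ i : Fin n, (a i ω ^ 2 - 2*η)) ^ 2) P := I12.add I3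
  have hid2 : ∀ ω, (1/(2*(n:ℝ))) * (∑ i : Fin n, (D i ω + a i ω) ^ 2) - η
      = (1/(2*(n:ℝ))) * (∑ i : Fin n, D i ω ^ 2) + (1/(n:ℝ)) * (∑ i : Fin n, D i ω * a i ω)
        + (1/(2*(n:ℝ))) * (∑ i : Fin n, (a i ω ^ 2 - 2*η)) := by
    intro ω
    have h1 : ∑ i : Fin n, (D i ω + a i ω) ^ 2
        = (∑ i : Fin n, D i ω ^ 2) + 2 * (∑ i : Fin n, D i ω * a i ω)
          + ∑ i : Fin n, a i ω ^ 2 := by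
      calc ∑ i : Fin n, (D i ω + a i ω) ^ 2
          = ∑ i : Fin n, (D i ω ^ 2 + 2 * (D i ω * a i ω) + a i ω ^ 2) :=
            Finset.sum_congr rfl (fun i _ => by ring)
        _ = _ := by rw [Finset.sum_add_distrib, Finset.sum_add_distrib, ← Finset.mul_sum]
    have h2 : ∑ i : Fin n, (a i ω ^ 2 - 2*η) = (∑ i : Fin n, a i ω ^ 2) - (n:ℝ) * (2*η) := by
      rw [Finset.sum_sub_distrib, Finset.sum_const, Finset.card_univ, Fintype.card_fin,
        nsmul_eq_mul]
    rw [h1, h2]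
    field_simp
    ring
  have hptw : ∀ ω, ((1/(2*(n:ℝ))) * ∑ i : Fin n, (D i ω + a i ω) ^ 2 - η) ^ 2
      ≤ 3 * ((1/(2*(n:ℝ))) * ∑ i : Fin n, D i ω ^ 2) ^ 2
        + 3 * ((1/(n:ℝ)) * ∑ i : Fin n, D i ω * a i ω) ^ 2
        + 3 * ((1/(2*(n:ℝ))) * ∑ i : Fin n, (a i ω ^ 2 - 2*η)) ^ 2 := by
    intro ω
    rw [hid2 ω]
    set x := (1/(2*(n:ℝ))) * (∑ i : Fin n, D i ω ^ 2)
    set y := (1/(n:ℝ)) * (∑ i : Fin n, D i ω * a i ω)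
    set z := (1/(2*(n:ℝ))) * (∑ i : Fin n, (a i ω ^ 2 - 2*η))
    nlinarith [sq_nonneg (x - y), sq_nonneg (y - z), sq_nonneg (x - z)]
  calc ∫ ω, ((1/(2*(n:ℝ))) * ∑ i : Fin n, (D i ω + a i ω) ^ 2 - η) ^ 2 ∂P
      ≤ ∫ ω, (3 * ((1/(2*(n:ℝ))) * ∑ i : Fin n, D i ω ^ 2) ^ 2
          + 3 * ((1/(n:ℝ)) * ∑ i : Fin n, D i ω * a i ω) ^ 2
          + 3 * ((1/(2*(n:ℝ))) * ∑ i : Fin n, (a i ω ^ 2 - 2*η)) ^ 2) ∂P :=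
        integral_mono hInt I123 hptw
    _ = 3 * (∫ ω, ((1/(2*(n:ℝ))) * ∑ i : Fin n, D i ω ^ 2) ^ 2 ∂P)
        + 3 * (∫ ω, ((1/(n:ℝ)) * ∑ i : Fin n, D i ω * a i ω) ^ 2 ∂P)
        + 3 * (∫ ω, ((1/(2*(n:ℝ))) * ∑ i : Fin n, (a i ω ^ 2 - 2*η)) ^ 2 ∂P) := by
        rw [integral_add I12 I3, integral_add I1 I2, integral_const_mul, integral_const_mul,
          integral_const_mul]
    _ ≤ 3 * (K/(4*(n:ℝ))) + 3 * (6*η*K/(n:ℝ)) + 3 * ((24*κ + 6*η^2)/(n:ℝ)) := by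
        have h1 := hA; have h2 := hB; have h3 := hCC
        linarith
    _ = (3*K/4 + 18*η*K + 72*κ + 18*η^2)/(n:ℝ) := by
        field_simp
        ring
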